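/- Let N ≥ 2, α ∈ (0,N), and let Ω, F ⊆ ℝ^N be two Lebesgue-measurable sets of finite measure such that the symmetric difference Ω Δ F is contained in some ball B_R(0). Then V_α(F) − V_α(Ω) ≤ C₀ · |Ω Δ F| · ( |Ω|^{α/N} + |F|^{α/N} ), where C₀ = C₀(N,α) = ∫_B |z|^{α−N} dz and B is the open ball in ℝ^N centered at the origin with Lebesgue measure 1. -/

import Mathlib

open MeasureTheory Metric Set
open scoped ENNReal

lemma riesz_scale {N : ℕ} {α c s : ℝ} (hc : 0 < c) :
    ∫⁻ z in ball (0 : EuclideanSpace ℝ (Fin N)) (c * s), ENNReal.ofReal (‖z‖ ^ (α - N)) =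
      ENNReal.ofReal (c ^ α) *
        ∫⁻ z in ball (0 : EuclideanSpace ℝ (Fin N)) s, ENNReal.ofReal (‖z‖ ^ (α - N)) := by
  set E := EuclideanSpace ℝ (Fin N)
  set k : E → ℝ≥0∞ := fun z => ENNReal.ofReal (‖z‖ ^ (α - N)) with hk
  have hkm : Measurable k := by fun_prop
  have hfin : Module.finrank ℝ E = N := finrank_euclideanSpace_fin
  have hvol : (volume : Measure E) = ENNReal.ofReal (c ^ N) • Measure.map (c • ·) volume := by
    rw [Measure.map_addHaar_smul volume hc.ne', hfin, smul_smul,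
      abs_of_nonneg (by positivity : (0:ℝ) ≤ (c ^ N)⁻¹),
      ← ENNReal.ofReal_mul (by positivity), mul_inv_cancel₀ (by positivity),
      ENNReal.ofReal_one, one_smul]
  have hind : Measurable ((ball (0:E) (c*s)).indicator k) :=
    hkm.indicator measurableSet_ball
  calc ∫⁻ z in ball (0 : E) (c * s), k z
      = ∫⁻ z, (ball (0:E) (c*s)).indicator k z ∂volume := (lintegral_indicator measurableSet_ball _).symm
    _ = ENNReal.ofReal (c ^ N) * ∫⁻ z, (ball (0:E) (c*s)).indicator k z ∂(Measure.map (c • ·) volume) := by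
        conv_lhs => rw [hvol]
        rw [lintegral_smul_measure, smul_eq_mul]
    _ = ENNReal.ofReal (c ^ N) * ∫⁻ z, (ball (0:E) (c*s)).indicator k (c • z) ∂volume := by
        rw [lintegral_map hind (measurable_const_smul c)]
    _ = ENNReal.ofReal (c ^ N) * ∫⁻ z, (ball (0:E) s).indicator (fun z => ENNReal.ofReal (c ^ (α - N)) * k z) z ∂volume := by
        congr 1
        refine lintegral_congr fun z => ?_
        have hmem : c • z ∈ ball (0:E) (c*s) ↔ z ∈ ball (0:E) s := by
          simp only [mem_ball, dist_zero_right, norm_smul, Real.norm_eq_abs,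
            abs_of_pos hc]
          exact mul_lt_mul_iff_right₀ hc
        have hval : k (c • z) = ENNReal.ofReal (c ^ (α - N)) * k z := by
          simp only [hk, norm_smul, Real.norm_eq_abs, abs_of_pos hc]
          rw [Real.mul_rpow hc.le (norm_nonneg _), ENNReal.ofReal_mul (by positivity)]
        by_cases h : z ∈ ball (0:E) s
        · rw [indicator_of_mem ((hmem).2 h), indicator_of_mem h, hval]
        · rw [indicator_of_notMem (fun hh => h ((hmem).1 hh)), indicator_of_notMem h]
    _ = ENNReal.ofReal (c ^ N) * (ENNReal.ofReal (c ^ (α - N)) * ∫⁻ z in ball (0:E) s, k z) := by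
        rw [lintegral_indicator measurableSet_ball, lintegral_const_mul _ hkm]
    _ = ENNReal.ofReal (c ^ α) * ∫⁻ z in ball (0:E) s, k z := by
        rw [← mul_assoc, ← ENNReal.ofReal_mul (by positivity)]
        congr 2
        rw [← Real.rpow_natCast c N, ← Real.rpow_add hc]
        ring_nf

lemma riesz_fin {N : ℕ} (hN : 0 < N) {α : ℝ} (hα : 0 < α) (hαN : α ≤ N) {s : ℝ} (hs : 0 < s) :
    ∫⁻ z in ball (0 : EuclideanSpace ℝ (Fin N)) s, ENNReal.ofReal (‖z‖ ^ (α - N)) < ⊤ := by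
  set E := EuclideanSpace ℝ (Fin N) with hE
  set k : E → ℝ≥0∞ := fun z => ENNReal.ofReal (‖z‖ ^ (α - N)) with hk
  set t : ℝ := (2:ℝ)⁻¹ with hts
  have ht : 0 < t := by norm_num [hts]
  have ht1 : t < 1 := by norm_num [hts]
  set A : ℕ → Set E := fun n => ball (0:E) (s * t ^ n) \ ball (0:E) (s * t ^ (n+1)) with hA
  have hsub : ball (0:E) s ⊆ {(0:E)} ∪ ⋃ n, A n := by
    intro z hz
    rcases eq_or_ne z 0 with rfl | hz0
    · exact Or.inl rfl
    · right
      have hzn : 0 < ‖z‖ := norm_pos_iff.2 hz0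
      have hzs : ‖z‖ < s := by simpa [mem_ball, dist_zero_right] using hz
      have hex : ∃ n, s * t ^ (n+1) ≤ ‖z‖ := by
        obtain ⟨n, hn⟩ := exists_pow_lt_of_lt_one (div_pos hzn hs) ht1
        refine ⟨n, ?_⟩
        have h1 : t ^ (n+1) ≤ t ^ n := pow_le_pow_of_le_one ht.le ht1.le (Nat.le_succ n)
        have := (lt_div_iff₀' hs).1 hn
        nlinarith
      classical
      set n := Nat.find hex with hn
      have h1 : s * t ^ (n+1) ≤ ‖z‖ := Nat.find_spec hex
      have h2 : ‖z‖ < s * t ^ n := by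
        rcases Nat.eq_zero_or_pos n with h0 | hpos
        · simpa [h0] using hzs
        · have h3 := Nat.find_min hex (show n - 1 < Nat.find hex by omega)
          have h4 : n - 1 + 1 = n := by omega
          rw [h4] at h3
          exact lt_of_not_ge h3
      refine mem_iUnion.2 ⟨n, ?_, ?_⟩
      · simpa [mem_ball, dist_zero_right] using h2
      · simp only [mem_ball, dist_zero_right, not_lt]
        exact h1
  set q : ℝ≥0∞ := ENNReal.ofReal (t ^ α) with hq
  set C : ℝ := s ^ α * t ^ (α - N) with hC
  have hqlt : q < 1 := by
    rw [hq]
    exact ENNReal.ofReal_lt_one.2 (Real.rpow_lt_one ht.le ht1 hα)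
  have key : ∀ n : ℕ, (s * t ^ (n+1)) ^ (α - N) * (s * t ^ n) ^ (N:ℕ) = C * (t ^ α) ^ n := by
    intro n
    have e1 : (s * t ^ (n+1)) ^ (α - N) = s ^ (α - N) * t ^ (((n:ℝ)+1) * (α - N)) := by
      rw [Real.mul_rpow hs.le (by positivity), ← Real.rpow_natCast t (n+1),
        ← Real.rpow_mul ht.le]
      push_cast; ring_nf
    have e2 : (s * t ^ n) ^ (N:ℕ) = s ^ ((N:ℕ):ℝ) * t ^ ((n:ℝ) * N) := by
      rw [← Real.rpow_natCast (s * t ^ n) N, Real.mul_rpow hs.le (by positivity),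
        ← Real.rpow_natCast t n, ← Real.rpow_mul ht.le]
    have e3 : (t ^ α) ^ n = t ^ ((n:ℝ) * α) := by
      rw [← Real.rpow_natCast (t ^ α) n, ← Real.rpow_mul ht.le]
      ring_nf
    rw [e1, e2, e3, hC]
    rw [show s ^ (α - N) * t ^ (((n:ℝ)+1) * (α - N)) * (s ^ ((N:ℕ):ℝ) * t ^ ((n:ℝ) * N))
        = (s ^ (α - N) * s ^ ((N:ℕ):ℝ)) * (t ^ (((n:ℝ)+1) * (α - N)) * t ^ ((n:ℝ) * N)) by ring,
      ← Real.rpow_add hs, ← Real.rpow_add ht,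
      show α - (N:ℝ) + ((N:ℕ):ℝ) = α by push_cast; ring,
      show ((n:ℝ)+1) * (α - N) + (n:ℝ) * N = (α - N) + (n:ℝ) * α by push_cast; ring,
      Real.rpow_add ht]
    ring
  have hv1 : volume (ball (0:E) 1) < ⊤ := measure_ball_lt_top
  have step : ∀ n : ℕ, ∫⁻ z in A n, k z ≤ ENNReal.ofReal C * q ^ n * volume (ball (0:E) 1) := by
    intro n
    have hrad : 0 < s * t ^ n := by positivity
    have hrad1 : 0 < s * t ^ (n+1) := by positivity
    have hub : ∀ z ∈ A n, k z ≤ ENNReal.ofReal ((s * t ^ (n+1)) ^ (α - N)) := by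
      intro z hz
      have hz2 : s * t ^ (n+1) ≤ ‖z‖ := by
        have := hz.2
        simpa [mem_ball, dist_zero_right, not_lt] using this
      exact ENNReal.ofReal_le_ofReal
        (Real.rpow_le_rpow_of_nonpos hrad1 hz2 (by simp [sub_nonpos]; exact hαN))
    calc ∫⁻ z in A n, k z
        ≤ ∫⁻ _ in A n, ENNReal.ofReal ((s * t ^ (n+1)) ^ (α - N)) :=
          setLIntegral_mono' (measurableSet_ball.diff measurableSet_ball) hub
      _ = ENNReal.ofReal ((s * t ^ (n+1)) ^ (α - N)) * volume (A n) := by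
          rw [setLIntegral_const]
      _ ≤ ENNReal.ofReal ((s * t ^ (n+1)) ^ (α - N)) *
            (ENNReal.ofReal ((s * t ^ n) ^ (N:ℕ)) * volume (ball (0:E) 1)) := by
          gcongr
          calc volume (A n) ≤ volume (ball (0:E) (s * t ^ n)) :=
                measure_mono diff_subset
            _ = ENNReal.ofReal ((s * t ^ n) ^ Module.finrank ℝ E) * volume (ball (0:E) 1) :=
                Measure.addHaar_ball_of_pos volume _ hrad
            _ = _ := by rw [finrank_euclideanSpace_fin]
      _ = ENNReal.ofReal C * q ^ n * volume (ball (0:E) 1) := by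
          rw [← mul_assoc, ← ENNReal.ofReal_mul (by positivity), key n, hq,
            ENNReal.ofReal_mul (by positivity), ← ENNReal.ofReal_pow (by positivity)]
  calc ∫⁻ z in ball (0:E) s, k z
      ≤ ∫⁻ z in ({(0:E)} ∪ ⋃ n, A n), k z := lintegral_mono_set hsub
    _ = ∫⁻ z in ⋃ n, A n, k z := by
        haveI : Nonempty (Fin N) := ⟨⟨0, hN⟩⟩
        refine setLIntegral_congr (MeasureTheory.union_ae_eq_right.2 ?_)
        exact measure_mono_null diff_subset (measure_singleton _)
    _ ≤ ∑' n, ∫⁻ z in A n, k z := lintegral_iUnion_le _ _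
    _ ≤ ∑' n, ENNReal.ofReal C * q ^ n * volume (ball (0:E) 1) := ENNReal.tsum_le_tsum step
    _ = (ENNReal.ofReal C * volume (ball (0:E) 1)) * ∑' n, q ^ n := by
        rw [← ENNReal.tsum_mul_left]
        congr 1; ext n; ring
    _ = (ENNReal.ofReal C * volume (ball (0:E) 1)) * (1 - q)⁻¹ := by
        rw [ENNReal.tsum_geometric]
    _ < ⊤ := by
        apply ENNReal.mul_lt_top (ENNReal.mul_lt_top ENNReal.ofReal_lt_top hv1)
        rw [ENNReal.inv_lt_top]
        exact tsub_pos_of_lt hqlt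

lemma riesz_translate {N : ℕ} {α ρ : ℝ} (x : EuclideanSpace ℝ (Fin N)) :
    ∫⁻ y in ball x ρ, ENNReal.ofReal (‖x - y‖ ^ (α - N)) =
      ∫⁻ z in ball (0 : EuclideanSpace ℝ (Fin N)) ρ, ENNReal.ofReal (‖z‖ ^ (α - N)) := by
  have hmp : MeasurePreserving (fun t => x - t)
      (volume : Measure (EuclideanSpace ℝ (Fin N))) volume :=
    Measure.measurePreserving_sub_left volume x
  have hemb : MeasurableEmbedding (fun t : EuclideanSpace ℝ (Fin N) => x - t) :=
    (MeasurableEquiv.subLeft x).measurableEmbedding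
  have hpre : (fun t : EuclideanSpace ℝ (Fin N) => x - t) ⁻¹' ball 0 ρ = ball x ρ := by
    ext y
    simp [mem_ball, dist_zero_right, dist_comm y x, dist_eq_norm]
  rw [← hpre]
  exact hmp.setLIntegral_comp_preimage_emb hemb
    (fun z => ENNReal.ofReal (‖z‖ ^ (α - N))) (ball 0 ρ)

set_option maxHeartbeats 1000000 in
lemma riesz_bathtub {N : ℕ} (hN : 0 < N) {α : ℝ} (hα : 0 < α) (hαN : α ≤ N) {r : ℝ} (hr : 0 < r)
    (hball : volume (ball (0 : EuclideanSpace ℝ (Fin N)) r) = 1)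
    {A : Set (EuclideanSpace ℝ (Fin N))} (hA : MeasurableSet A) (hAfin : volume A < ⊤)
    (x : EuclideanSpace ℝ (Fin N)) :
    ∫⁻ y in A, ENNReal.ofReal (‖x - y‖ ^ (α - N)) ≤
      ENNReal.ofReal ((volume A).toReal ^ (α / N)) *
        ∫⁻ z in ball (0 : EuclideanSpace ℝ (Fin N)) r, ENNReal.ofReal (‖z‖ ^ (α - N)) := by
  haveI : Nonempty (Fin N) := ⟨⟨0, hN⟩⟩
  set k : EuclideanSpace ℝ (Fin N) → ℝ≥0∞ := fun z => ENNReal.ofReal (‖z‖ ^ (α - N)) with hk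
  rcases eq_or_ne (volume A) 0 with hA0 | hA0
  · rw [setLIntegral_measure_zero _ _ hA0]
    exact bot_le
  set m : ℝ := (volume A).toReal with hm
  have hm0 : 0 < m := ENNReal.toReal_pos hA0 hAfin.ne
  set c : ℝ := m ^ ((N:ℝ)⁻¹) with hc
  have hc0 : 0 < c := Real.rpow_pos_of_pos hm0 _
  set ρ : ℝ := c * r with hρdef
  have hρ : 0 < ρ := mul_pos hc0 hr
  set B : Set (EuclideanSpace ℝ (Fin N)) := ball x ρ with hB
  have hBmeas : MeasurableSet B := measurableSet_ball
  have hBfin : volume B ≠ ⊤ := measure_ball_lt_top.ne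
  have hcN : c ^ (N:ℕ) = m := by
    rw [hc, ← Real.rpow_natCast (m ^ ((N:ℝ)⁻¹)) N, ← Real.rpow_mul hm0.le,
      inv_mul_cancel₀ (by exact_mod_cast hN.ne' : (N:ℝ) ≠ 0), Real.rpow_one]
  have hvolB : volume B = volume A := by
    have h1 : volume B = ENNReal.ofReal (ρ ^ (N:ℕ)) * volume (ball (0 : EuclideanSpace ℝ (Fin N)) 1) := by
      rw [hB, Measure.addHaar_ball_of_pos volume x hρ, finrank_euclideanSpace_fin]
    have h2 : (1:ℝ≥0∞) = ENNReal.ofReal (r ^ (N:ℕ)) * volume (ball (0 : EuclideanSpace ℝ (Fin N)) 1) := by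
      rw [← hball, Measure.addHaar_ball_of_pos volume _ hr, finrank_euclideanSpace_fin]
    have h3 : ρ ^ (N:ℕ) = c ^ (N:ℕ) * r ^ (N:ℕ) := by rw [hρdef, mul_pow]
    rw [h1, h3, ENNReal.ofReal_mul (by positivity), mul_assoc, ← h2, mul_one, hcN, hm,
      ENNReal.ofReal_toReal hAfin.ne]
  -- upper bound on A \ B
  have hub : ∫⁻ y in A \ B, k (x - y) ≤ ENNReal.ofReal (ρ ^ (α - N)) * volume (A \ B) := by
    calc ∫⁻ y in A \ B, k (x - y)
        ≤ ∫⁻ _ in A \ B, ENNReal.ofReal (ρ ^ (α - N)) := by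
          refine setLIntegral_mono' (hA.diff hBmeas) fun y hy => ?_
          have hdist : ρ ≤ ‖x - y‖ := by
            have := hy.2
            simp only [hB, mem_ball, not_lt, dist_comm] at this
            rwa [dist_eq_norm] at this
          exact ENNReal.ofReal_le_ofReal
            (Real.rpow_le_rpow_of_nonpos hρ hdist (by simpa [sub_nonpos] using hαN))
      _ = ENNReal.ofReal (ρ ^ (α - N)) * volume (A \ B) := setLIntegral_const _ _
  -- measure equality
  have hmeq : volume (A \ B) = volume (B \ A) := by
    have h1 : volume (A \ B) = volume (A ∪ B) - volume B := by
      rw [← union_diff_right (s := A)]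
      exact measure_diff subset_union_right hBmeas.nullMeasurableSet hBfin
    have h2 : volume (B \ A) = volume (A ∪ B) - volume A := by
      rw [← union_diff_left (s := A)]
      exact measure_diff subset_union_left hA.nullMeasurableSet hAfin.ne
    rw [h1, h2, hvolB]
  -- lower bound on B \ A
  have hlb : ENNReal.ofReal (ρ ^ (α - N)) * volume (B \ A) ≤ ∫⁻ y in B \ A, k (x - y) := by
    have := setLIntegral_const (μ := (volume : Measure (EuclideanSpace ℝ (Fin N)))) (B \ A) (ENNReal.ofReal (ρ ^ (α - N)))
    rw [← this]
    refine setLIntegral_mono_ae (by fun_prop) ?_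
    have hae : ∀ᵐ y : EuclideanSpace ℝ (Fin N) ∂volume, y ≠ x := by
      have h0 : volume ({x} : Set (EuclideanSpace ℝ (Fin N))) = 0 := measure_singleton x
      rw [ae_iff]
      simpa [Set.setOf_eq_eq_singleton'] using h0
    filter_upwards [hae] with y hy hyB
    have hxy : 0 < ‖x - y‖ := by
      rw [norm_pos_iff, sub_ne_zero]
      exact fun h => hy h.symm
    have hlt : ‖x - y‖ < ρ := by
      have := hyB.1
      rw [hB, mem_ball, dist_comm, dist_eq_norm] at this
      exact this
    exact ENNReal.ofReal_le_ofReal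
      (Real.rpow_le_rpow_of_nonpos hxy hlt.le (by simpa [sub_nonpos] using hαN))
  -- combine
  have hsplit : ∫⁻ y in A, k (x - y) =
      (∫⁻ y in A ∩ B, k (x - y)) + ∫⁻ y in A \ B, k (x - y) := by
    have hu := lintegral_union (μ := (volume : Measure (EuclideanSpace ℝ (Fin N))))
      (f := fun y => k (x - y)) (A := A ∩ B) (hA.diff hBmeas)
      (disjoint_sdiff_self_right.mono_left inter_subset_right :
        Disjoint (A ∩ B) (A \ B))
    beta_reduce at hu
    rw [← hu, inter_union_diff]
  have hsplit2 : ∫⁻ y in (A ∩ B) ∪ (B \ A), k (x - y) =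
      (∫⁻ y in A ∩ B, k (x - y)) + ∫⁻ y in B \ A, k (x - y) := by
    have hu2 := lintegral_union (μ := (volume : Measure (EuclideanSpace ℝ (Fin N))))
      (f := fun y => k (x - y)) (A := A ∩ B) (hBmeas.diff hA)
      (disjoint_sdiff_self_right.mono_left inter_subset_left :
        Disjoint (A ∩ B) (B \ A))
    beta_reduce at hu2
    exact hu2
  calc ∫⁻ y in A, k (x - y)
      = (∫⁻ y in A ∩ B, k (x - y)) + ∫⁻ y in A \ B, k (x - y) := hsplit
    _ ≤ (∫⁻ y in A ∩ B, k (x - y)) + ∫⁻ y in B \ A, k (x - y) := by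
        refine add_le_add le_rfl ?_
        exact hub.trans (hmeq ▸ hlb)
    _ = ∫⁻ y in (A ∩ B) ∪ (B \ A), k (x - y) := hsplit2.symm
    _ ≤ ∫⁻ y in B, k (x - y) := by
        refine lintegral_mono_set ?_
        rintro y (⟨-, hy⟩ | ⟨hy, -⟩) <;> exact hy
    _ = ∫⁻ z in ball (0 : EuclideanSpace ℝ (Fin N)) ρ, k z := riesz_translate x
    _ = ENNReal.ofReal (c ^ α) * ∫⁻ z in ball (0 : EuclideanSpace ℝ (Fin N)) r, k z :=
        riesz_scale hc0
    _ = ENNReal.ofReal (m ^ (α / N)) * ∫⁻ z in ball (0 : EuclideanSpace ℝ (Fin N)) r, k z := by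
        congr 2
        rw [hc, ← Real.rpow_mul hm0.le]
        congr 1
        field_simp


set_option maxHeartbeats 2000000 in
/-- For `N ≥ 2`, `α ∈ (0,N)` and measurable sets `Ω, F ⊆ ℝ^N` of finite
measure whose symmetric difference is contained in some ball `B_R(0)`, one has
`V_α(F) − V_α(Ω) ≤ C₀ · |Ω Δ F| · (|Ω|^{α/N} + |F|^{α/N})`, where
`C₀ = ∫_B |z|^{α−N} dz` and `B` is the ball centered at the origin of Lebesgue measure 1. -/
theorem riesz_energy_diff_le (N : ℕ) (hN : 2 ≤ N) (α : ℝ) (hα : α ∈ Set.Ioo (0 : ℝ) N)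
    (Ω F : Set (EuclideanSpace ℝ (Fin N)))
    (hΩmeas : MeasurableSet Ω) (hFmeas : MeasurableSet F)
    (hΩfin : volume Ω < ⊤) (hFfin : volume F < ⊤)
    (R : ℝ) (hR : 0 < R)
    (hsub : symmDiff Ω F ⊆ ball (0 : EuclideanSpace ℝ (Fin N)) R)
    (r : ℝ) (hr : 0 < r)
    (hball : volume (ball (0 : EuclideanSpace ℝ (Fin N)) r) = 1) :
    (∫ x in F, ∫ y in F, ‖x - y‖ ^ (α - N)) - (∫ x in Ω, ∫ y in Ω, ‖x - y‖ ^ (α - N)) ≤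
      (∫ z in ball (0 : EuclideanSpace ℝ (Fin N)) r, ‖z‖ ^ (α - N)) *
        (volume (symmDiff Ω F)).toReal *
        ((volume Ω).toReal ^ (α / N) + (volume F).toReal ^ (α / N)) := by
  obtain ⟨hα0, hαN⟩ := hα
  have hN0 : 0 < N := by omega
  haveI : Nonempty (Fin N) := ⟨⟨0, hN0⟩⟩
  set k : EuclideanSpace ℝ (Fin N) → ℝ≥0∞ :=
    fun z => ENNReal.ofReal (‖z‖ ^ (α - N)) with hk
  set L : ℝ≥0∞ :=
    ∫⁻ z in ball (0 : EuclideanSpace ℝ (Fin N)) r, ENNReal.ofReal (‖z‖ ^ (α - N)) with hL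
  have hLfin : L < ⊤ := riesz_fin hN0 hα0 hαN.le hr
  have hknn : ∀ z : EuclideanSpace ℝ (Fin N), 0 ≤ ‖z‖ ^ (α - (N:ℝ)) :=
    fun z => Real.rpow_nonneg (norm_nonneg _) _
  have hC0 : (∫ z in ball (0 : EuclideanSpace ℝ (Fin N)) r, ‖z‖ ^ (α - N)) = L.toReal := by
    have hm : Measurable fun z : EuclideanSpace ℝ (Fin N) => ‖z‖ ^ (α - (N:ℝ)) := by fun_prop
    rw [integral_eq_lintegral_of_nonneg_ae (ae_of_all _ fun z => hknn z) hm.aestronglyMeasurable]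
  have hkp : Measurable (fun p : EuclideanSpace ℝ (Fin N) × EuclideanSpace ℝ (Fin N) =>
      k (p.1 - p.2)) := by fun_prop
  set D : Set (EuclideanSpace ℝ (Fin N)) := symmDiff Ω F with hD
  have hDmeas : MeasurableSet D := by
    rw [hD, Set.symmDiff_def]
    exact (hΩmeas.diff hFmeas).union (hFmeas.diff hΩmeas)
  have hDsub : D ⊆ Ω ∪ F := by
    rw [hD, Set.symmDiff_def]
    rintro z (⟨h, -⟩ | ⟨h, -⟩)
    · exact Or.inl h
    · exact Or.inr h
  have hDfin : volume D < ⊤ :=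
    lt_of_le_of_lt (le_trans (measure_mono hDsub) (measure_union_le _ _))
      (ENNReal.add_lt_top.2 ⟨hΩfin, hFfin⟩)
  have hFD : F \ Ω ⊆ D := by
    rw [hD, Set.symmDiff_def]
    exact Set.subset_union_right
  -- bathtub bounds
  have hbF : ∀ x, (∫⁻ y in F, k (x - y)) ≤
      ENNReal.ofReal ((volume F).toReal ^ (α / N)) * L :=
    fun x => riesz_bathtub hN0 hα0 hαN.le hr hball hFmeas hFfin x
  have hbΩ : ∀ x, (∫⁻ y in Ω, k (x - y)) ≤
      ENNReal.ofReal ((volume Ω).toReal ^ (α / N)) * L :=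
    fun x => riesz_bathtub hN0 hα0 hαN.le hr hball hΩmeas hΩfin x
  set cF : ℝ≥0∞ := ENNReal.ofReal ((volume F).toReal ^ (α / N)) * L with hcF
  set cΩ : ℝ≥0∞ := ENNReal.ofReal ((volume Ω).toReal ^ (α / N)) * L with hcΩ
  have hcFfin : cF < ⊤ := ENNReal.mul_lt_top ENNReal.ofReal_lt_top hLfin
  have hcΩfin : cΩ < ⊤ := ENNReal.mul_lt_top ENNReal.ofReal_lt_top hLfin
  -- generic bound for double integrals
  have hdouble : ∀ (S T : Set (EuclideanSpace ℝ (Fin N))) (c : ℝ≥0∞),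
      (∀ x, (∫⁻ y in T, k (x - y)) ≤ c) →
      (∫⁻ x in S, ∫⁻ y in T, k (x - y)) ≤ c * volume S := by
    intro S T c hc
    calc (∫⁻ x in S, ∫⁻ y in T, k (x - y)) ≤ ∫⁻ _ in S, c := lintegral_mono fun x => hc x
      _ = c * volume S := setLIntegral_const _ _
  -- main ENNReal inequality
  have hsplit_outer : (∫⁻ x in F, ∫⁻ y in F, k (x - y)) =
      (∫⁻ x in F ∩ Ω, ∫⁻ y in F, k (x - y)) + ∫⁻ x in F \ Ω, ∫⁻ y in F, k (x - y) := by
    have hu := lintegral_union (μ := (volume : Measure (EuclideanSpace ℝ (Fin N))))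
      (f := fun x => ∫⁻ y in F, k (x - y)) (A := F ∩ Ω) (hFmeas.diff hΩmeas)
      (disjoint_sdiff_self_right.mono_left inter_subset_right : Disjoint (F ∩ Ω) (F \ Ω))
    beta_reduce at hu
    rw [← hu, inter_union_diff]
  have hsplit_inner : ∀ x, (∫⁻ y in F, k (x - y)) =
      (∫⁻ y in F ∩ Ω, k (x - y)) + ∫⁻ y in F \ Ω, k (x - y) := by
    intro x
    have hu := lintegral_union (μ := (volume : Measure (EuclideanSpace ℝ (Fin N))))
      (f := fun y => k (x - y)) (A := F ∩ Ω) (hFmeas.diff hΩmeas)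
      (disjoint_sdiff_self_right.mono_left inter_subset_right : Disjoint (F ∩ Ω) (F \ Ω))
    beta_reduce at hu
    rw [← hu, inter_union_diff]
  have hH1 : Measurable fun x => ∫⁻ y in F ∩ Ω, k (x - y) :=
    Measurable.lintegral_prod_right' (f := fun p : _ × _ => k (p.1 - p.2)) hkp
  have main : (∫⁻ x in F, ∫⁻ y in F, k (x - y)) ≤
      (∫⁻ x in Ω, ∫⁻ y in Ω, k (x - y)) + (cΩ * volume D + cF * volume D) := by
    have h2 : (∫⁻ x in F ∩ Ω, ∫⁻ y in F, k (x - y)) =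
        (∫⁻ x in F ∩ Ω, ∫⁻ y in F ∩ Ω, k (x - y)) +
          ∫⁻ x in F ∩ Ω, ∫⁻ y in F \ Ω, k (x - y) := by
      rw [← lintegral_add_left hH1]
      exact lintegral_congr fun x => hsplit_inner x
    have hT1 : (∫⁻ x in F ∩ Ω, ∫⁻ y in F ∩ Ω, k (x - y)) ≤
        ∫⁻ x in Ω, ∫⁻ y in Ω, k (x - y) := by
      refine le_trans (lintegral_mono fun x => lintegral_mono_set inter_subset_right) ?_
      exact lintegral_mono_set inter_subset_right
    have hT2 : (∫⁻ x in F ∩ Ω, ∫⁻ y in F \ Ω, k (x - y)) ≤ cΩ * volume D := by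
      have step1 : (∫⁻ x in F ∩ Ω, ∫⁻ y in F \ Ω, k (x - y)) ≤
          ∫⁻ x in Ω, ∫⁻ y in D, k (x - y) := by
        refine le_trans (lintegral_mono fun x => lintegral_mono_set hFD) ?_
        exact lintegral_mono_set inter_subset_right
      have hswap : (∫⁻ x in Ω, ∫⁻ y in D, k (x - y)) =
          ∫⁻ y in D, ∫⁻ x in Ω, k (x - y) :=
        lintegral_lintegral_swap hkp.aemeasurable
      have hsymm : (∫⁻ y in D, ∫⁻ x in Ω, k (x - y)) =
          ∫⁻ y in D, ∫⁻ x in Ω, k (y - x) := by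
        refine lintegral_congr fun y => lintegral_congr fun x => ?_
        rw [hk]
        simp only [norm_sub_rev]
      have hbound : (∫⁻ y in D, ∫⁻ x in Ω, k (y - x)) ≤ cΩ * volume D :=
        hdouble D Ω cΩ hbΩ
      calc (∫⁻ x in F ∩ Ω, ∫⁻ y in F \ Ω, k (x - y))
          ≤ ∫⁻ x in Ω, ∫⁻ y in D, k (x - y) := step1
        _ = ∫⁻ y in D, ∫⁻ x in Ω, k (y - x) := by rw [hswap, hsymm]
        _ ≤ cΩ * volume D := hbound
    have hT3 : (∫⁻ x in F \ Ω, ∫⁻ y in F, k (x - y)) ≤ cF * volume D := by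
      refine le_trans (lintegral_mono_set hFD) ?_
      exact hdouble D F cF hbF
    calc (∫⁻ x in F, ∫⁻ y in F, k (x - y))
        = ((∫⁻ x in F ∩ Ω, ∫⁻ y in F ∩ Ω, k (x - y)) +
            ∫⁻ x in F ∩ Ω, ∫⁻ y in F \ Ω, k (x - y)) +
            ∫⁻ x in F \ Ω, ∫⁻ y in F, k (x - y) := by rw [hsplit_outer, h2]
      _ ≤ ((∫⁻ x in Ω, ∫⁻ y in Ω, k (x - y)) + cΩ * volume D) + cF * volume D := by
          exact add_le_add (add_le_add hT1 hT2) hT3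
      _ = (∫⁻ x in Ω, ∫⁻ y in Ω, k (x - y)) + (cΩ * volume D + cF * volume D) := by
          rw [add_assoc]
  -- finiteness of double integrals
  have hJF_fin : (∫⁻ x in F, ∫⁻ y in F, k (x - y)) < ⊤ :=
    lt_of_le_of_lt (hdouble F F cF hbF) (ENNReal.mul_lt_top hcFfin hFfin)
  have hJΩ_fin : (∫⁻ x in Ω, ∫⁻ y in Ω, k (x - y)) < ⊤ :=
    lt_of_le_of_lt (hdouble Ω Ω cΩ hbΩ) (ENNReal.mul_lt_top hcΩfin hΩfin)
  -- conversion of real double integrals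
  have conv : ∀ (S : Set (EuclideanSpace ℝ (Fin N))), MeasurableSet S → volume S < ⊤ →
      (∫ x in S, ∫ y in S, ‖x - y‖ ^ (α - N)) =
        (∫⁻ x in S, ∫⁻ y in S, k (x - y)).toReal := by
    intro S hS hSfin
    have hb := fun x => riesz_bathtub hN0 hα0 hαN.le hr hball hS hSfin x
    have hmeasH : Measurable fun x => ∫⁻ y in S, k (x - y) :=
      Measurable.lintegral_prod_right' (f := fun p : _ × _ => k (p.1 - p.2)) hkp
    have hfinH : ∀ x, (∫⁻ y in S, k (x - y)) ≠ ⊤ :=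
      fun x => ((hb x).trans_lt (ENNReal.mul_lt_top ENNReal.ofReal_lt_top hLfin)).ne
    calc ∫ x in S, ∫ y in S, ‖x - y‖ ^ (α - N)
        = ∫ x in S, (∫⁻ y in S, k (x - y)).toReal := by
          refine integral_congr_ae (ae_of_all _ fun x => ?_)
          beta_reduce
          have hmx : Measurable fun y : EuclideanSpace ℝ (Fin N) => ‖x - y‖ ^ (α - (N:ℝ)) := by
            fun_prop
          rw [integral_eq_lintegral_of_nonneg_ae
            (ae_of_all _ fun y : EuclideanSpace ℝ (Fin N) => hknn (x - y))
            hmx.aestronglyMeasurable]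
      _ = (∫⁻ x in S, ENNReal.ofReal ((∫⁻ y in S, k (x - y)).toReal)).toReal := by
          rw [integral_eq_lintegral_of_nonneg_ae (ae_of_all _ fun x => ENNReal.toReal_nonneg)
            hmeasH.ennreal_toReal.aestronglyMeasurable]
      _ = (∫⁻ x in S, ∫⁻ y in S, k (x - y)).toReal := by
          congr 1
          exact lintegral_congr fun x => ENNReal.ofReal_toReal (hfinH x)
  rw [conv F hFmeas hFfin, conv Ω hΩmeas hΩfin, hC0]
  -- final real arithmetic
  have hRHSfin : ((∫⁻ x in Ω, ∫⁻ y in Ω, k (x - y)) + (cΩ * volume D + cF * volume D)) ≠ ⊤ := by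
    refine (ENNReal.add_lt_top.2 ⟨hJΩ_fin, ENNReal.add_lt_top.2 ⟨?_, ?_⟩⟩).ne
    · exact ENNReal.mul_lt_top hcΩfin hDfin
    · exact ENNReal.mul_lt_top hcFfin hDfin
  have hmain' := ENNReal.toReal_mono hRHSfin main
  have e1 : (cΩ * volume D).toReal =
      (volume Ω).toReal ^ (α / N) * L.toReal * (volume D).toReal := by
    rw [hcΩ, ENNReal.toReal_mul, ENNReal.toReal_mul,
      ENNReal.toReal_ofReal (Real.rpow_nonneg ENNReal.toReal_nonneg _)]
  have e2 : (cF * volume D).toReal =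
      (volume F).toReal ^ (α / N) * L.toReal * (volume D).toReal := by
    rw [hcF, ENNReal.toReal_mul, ENNReal.toReal_mul,
      ENNReal.toReal_ofReal (Real.rpow_nonneg ENNReal.toReal_nonneg _)]
  rw [ENNReal.toReal_add hJΩ_fin.ne (ENNReal.add_lt_top.2
      ⟨ENNReal.mul_lt_top hcΩfin hDfin, ENNReal.mul_lt_top hcFfin hDfin⟩).ne,
    ENNReal.toReal_add (ENNReal.mul_lt_top hcΩfin hDfin).ne
      (ENNReal.mul_lt_top hcFfin hDfin).ne, e1, e2] at hmain'
  nlinarith [hmain']
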